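/- Let A be a unital C*-algebra with the strong Dixmier property: for every a ∈ A and every ε > 0 there are n ∈ ℕ, unitaries u₁, …, uₙ ∈ A, nonnegative reals λ₁, …, λₙ with λ₁ + ⋯ + λₙ = 1, and μ ∈ ℂ such that ‖μ·1 − ∑ᵢ λᵢ uᵢ* a uᵢ‖ < ε. Then A has at most one tracial state: any two tracial states on A are equal. -/

import Mathlib

open ComplexStarModule

section aux

variable {A : Type*} [CStarAlgebra A] [PartialOrder A] [StarOrderedRing A]

lemma aux_pos (f : A →ₗ[ℂ] ℂ)
    (hpos : ∀ x : A, ∃ r : ℝ, 0 ≤ r ∧ f (star x * x) = (r : ℂ)) :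
    ∀ b : A, 0 ≤ b → ∃ r : ℝ, 0 ≤ r ∧ f b = (r : ℂ) := by
  intro b hb
  obtain ⟨r, hr, hfr⟩ := hpos (CFC.sqrt b)
  refine ⟨r, hr, ?_⟩
  have hsa : IsSelfAdjoint (CFC.sqrt b) := IsSelfAdjoint.of_nonneg (CFC.sqrt_nonneg b)
  rwa [hsa.star_eq, CFC.sqrt_mul_sqrt_self b hb] at hfr

lemma aux_sa_bound (f : A →ₗ[ℂ] ℂ) (h1 : f 1 = 1)
    (hpos : ∀ x : A, ∃ r : ℝ, 0 ≤ r ∧ f (star x * x) = (r : ℂ)) :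
    ∀ b : A, IsSelfAdjoint b → ‖f b‖ ≤ ‖b‖ := by
  intro b hb
  have hc : f ((‖b‖ : ℝ) • (1 : A)) = (‖b‖ : ℂ) := by
    rw [← Complex.coe_smul, map_smul, h1, smul_eq_mul, mul_one]
  have hle : b ≤ algebraMap ℝ A ‖b‖ := hb.le_algebraMap_norm_self
  have hge : -algebraMap ℝ A ‖b‖ ≤ b := hb.neg_algebraMap_norm_le_self
  have halg : algebraMap ℝ A ‖b‖ = (‖b‖ : ℝ) • (1 : A) := Algebra.algebraMap_eq_smul_one _
  obtain ⟨r1, hr1, hfr1⟩ := aux_pos f hpos ((‖b‖ : ℝ) • (1 : A) - b)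
    (by rw [sub_nonneg, ← halg]; exact hle)
  obtain ⟨r2, hr2, hfr2⟩ := aux_pos f hpos ((‖b‖ : ℝ) • (1 : A) + b)
    (by rw [← halg, ← neg_le_iff_add_nonneg]; exact neg_le.mp hge)
  rw [map_sub, hc] at hfr1
  rw [map_add, hc] at hfr2
  have hfb : f b = ((‖b‖ - r1 : ℝ) : ℂ) := by
    push_cast
    linear_combination -hfr1
  rw [hfb, Complex.norm_real, Real.norm_eq_abs]
  have h2 : ‖b‖ - r1 = r2 - ‖b‖ := by
    have : ((‖b‖ - r1 : ℝ) : ℂ) = ((r2 - ‖b‖ : ℝ) : ℂ) := by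
      push_cast
      linear_combination hfr1 + hfr2
    exact_mod_cast this
  rw [abs_le]
  constructor
  · linarith
  · linarith

lemma aux_bound (f : A →ₗ[ℂ] ℂ) (h1 : f 1 = 1)
    (hpos : ∀ x : A, ∃ r : ℝ, 0 ≤ r ∧ f (star x * x) = (r : ℂ)) :
    ∀ z : A, ‖f z‖ ≤ 2 * ‖z‖ := by
  intro z
  have hz := realPart_add_I_smul_imaginaryPart z
  have hre : ‖(ℜ z : A)‖ ≤ ‖z‖ := by
    rw [realPart_apply_coe]
    calc ‖(2 : ℝ)⁻¹ • (z + star z)‖ ≤ (2 : ℝ)⁻¹ * (‖z‖ + ‖star z‖) := by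
          rw [norm_smul]
          gcongr
          · simp
          · exact norm_add_le _ _
      _ = ‖z‖ := by rw [norm_star]; ring
  have him : ‖(ℑ z : A)‖ ≤ ‖z‖ := by
    rw [imaginaryPart_apply_coe]
    calc ‖-Complex.I • (2 : ℝ)⁻¹ • (z - star z)‖ = ‖(2 : ℝ)⁻¹ • (z - star z)‖ := by
          rw [norm_smul]; simp
      _ ≤ (2 : ℝ)⁻¹ * (‖z‖ + ‖star z‖) := by
          rw [norm_smul]
          gcongr
          · simp
          · exact norm_sub_le _ _
      _ = ‖z‖ := by rw [norm_star]; ring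
  calc ‖f z‖ = ‖f (ℜ z : A) + Complex.I * f (ℑ z : A)‖ := by
        conv_lhs => rw [← hz]
        rw [map_add, map_smul, smul_eq_mul]
    _ ≤ ‖f (ℜ z : A)‖ + ‖Complex.I * f (ℑ z : A)‖ := norm_add_le _ _
    _ ≤ ‖z‖ + ‖z‖ := by
        rw [norm_mul, Complex.norm_I, one_mul]
        gcongr
        · exact (aux_sa_bound f h1 hpos _ (ℜ z).2).trans hre
        · exact (aux_sa_bound f h1 hpos _ (ℑ z).2).trans him
    _ = 2 * ‖z‖ := by ring

lemma aux_trace (f : A →ₗ[ℂ] ℂ) (htr : ∀ a b : A, f (a * b) = f (b * a))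
    (a u : A) (hu : u ∈ unitary A) : f (star u * a * u) = f a := by
  rw [htr, ← mul_assoc, (Unitary.mem_iff.mp hu).2, one_mul]

end aux

/-- A unital C*-algebra with the strong Dixmier property has at most one tracial state. -/
theorem stmt_12 {A : Type*} [CStarAlgebra A]
    (hDix : ∀ a : A, ∀ ε > (0 : ℝ), ∃ (n : ℕ) (u : Fin n → A) (lam : Fin n → ℝ) (μ : ℂ),
      (∀ i, u i ∈ unitary A) ∧ (∀ i, 0 ≤ lam i) ∧ (∑ i, lam i) = 1 ∧
      ‖μ • (1 : A) - ∑ i, lam i • (star (u i) * a * u i)‖ < ε)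
    (τ σ : A →ₗ[ℂ] ℂ)
    (hτ1 : τ 1 = 1) (hτpos : ∀ x : A, ∃ r : ℝ, 0 ≤ r ∧ τ (star x * x) = (r : ℂ))
    (hτtr : ∀ a b : A, τ (a * b) = τ (b * a))
    (hσ1 : σ 1 = 1) (hσpos : ∀ x : A, ∃ r : ℝ, 0 ≤ r ∧ σ (star x * x) = (r : ℂ))
    (hσtr : ∀ a b : A, σ (a * b) = σ (b * a)) :
    τ = σ := by
  letI := CStarAlgebra.spectralOrder A
  haveI := CStarAlgebra.spectralOrderedRing A
  ext a
  have key : ∀ ε > (0 : ℝ), ‖τ a - σ a‖ ≤ 4 * ε := by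
    intro ε hε
    obtain ⟨n, u, lam, μ, hu, hlam, hsum, hnorm⟩ := hDix a ε hε
    set z : A := μ • (1 : A) - ∑ i, lam i • (star (u i) * a * u i) with hzdef
    have havg : ∀ (f : A →ₗ[ℂ] ℂ), (∀ a b : A, f (a * b) = f (b * a)) →
        f (∑ i, lam i • (star (u i) * a * u i)) = f a := by
      intro f htr
      rw [map_sum]
      have : ∀ i, f (lam i • (star (u i) * a * u i)) = (lam i : ℂ) * f a := by
        intro i
        rw [← Complex.coe_smul, map_smul, smul_eq_mul, aux_trace f htr a (u i) (hu i)]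
      rw [Finset.sum_congr rfl fun i _ => this i, ← Finset.sum_mul, ← Complex.ofReal_sum,
        hsum, Complex.ofReal_one, one_mul]
    have hτz : τ z = μ - τ a := by
      rw [hzdef, map_sub, map_smul, hτ1, smul_eq_mul, mul_one, havg τ hτtr]
    have hσz : σ z = μ - σ a := by
      rw [hzdef, map_sub, map_smul, hσ1, smul_eq_mul, mul_one, havg σ hσtr]
    have hd : τ a - σ a = σ z - τ z := by rw [hτz, hσz]; ring
    rw [hd]
    calc ‖σ z - τ z‖ ≤ ‖σ z‖ + ‖τ z‖ := norm_sub_le _ _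
      _ ≤ 2 * ‖z‖ + 2 * ‖z‖ := by
          gcongr
          · exact aux_bound σ hσ1 hσpos z
          · exact aux_bound τ hτ1 hτpos z
      _ ≤ 4 * ε := by nlinarith [norm_nonneg z]
  have : ‖τ a - σ a‖ ≤ 0 := by
    by_contra h
    push_neg at h
    have := key (‖τ a - σ a‖ / 8) (by linarith)
    linarith
  exact sub_eq_zero.mp (norm_le_zero_iff.mp this)
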